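/- Let μ and η be partitions and let k, u, v be formal variables. Then M(k u^{−1}; u, v) · ∏_{(n,m)∈ℤ_{>0}²} (1 − k u^{−a_μ(n,m)−1} v^{−l_η(n,m)}) = ∏_{x∈μ} (1 − k u^{−a_μ(x)−1} v^{−l_η(x)}) · ∏_{z∈η} (1 − k u^{a_η(z)} v^{l_μ(z)+1}), where M(k u^{−1}; u, v) = ∏_{n,m>0}(1 − k u^{n−1} v^{m})^{−1}. Both sides are formal power series in k; for each d ≥ 0 the coefficient of k^d on the left is a well-defined formal Laurent sum in u, v (each monomial u^A v^B occurring with a finite integer coefficient, and with exponents bounded below: A ≥ −d·μ_1, B ≥ −d·η'_1), and the identity asserts equality of all these coefficients. In particular the left-hand side is a polynomial in k. -/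

import Mathlib

/-!
STATEMENT 1.
Partitions are encoded as Mathlib `YoungDiagram`s (0-indexed cells).  Monomials
`u^A v^B` are recorded by their exponent pairs `(A, B) ∈ ℤ × ℤ`.  The identity
`M(k u⁻¹; u, v) · ∏_{(n,m)∈ℤ_{>0}²} (1 − k u^{−a_μ(n,m)−1} v^{−l_η(n,m)})
   = ∏_{x∈μ} (1 − k u^{−a_μ(x)−1} v^{−l_η(x)}) · ∏_{z∈η} (1 − k u^{a_η(z)} v^{l_μ(z)+1})`
is stated coefficientwise in `k, u, v`: the coefficient of `k^d u^A v^B` on the left is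
`∑_{d₂≤d} (−1)^{d₂} · #{(m, s) : m a multiset of ℤ_{>0}² of size d−d₂ (from the expansion
`M(k u⁻¹;u,v) = ∑_d h_d k^d`, the factor `(n,m)` contributing `u^{n−1} v^m`), `s` a
`d₂`-element finite subset of ℤ_{>0}², with total exponent `(A,B)`}`, and on the right it
is `(−1)^d · #{(s,t) : s ⊆ μ, t ⊆ η, |s|+|t| = d, total exponent (A,B)}`.
-/

/-- Arm length as an integer (cell `x = (i,j)` is the 1-indexed cell `(i+1, j+1)`). -/
def armZ (Y : YoungDiagram) (x : ℕ × ℕ) : ℤ := (Y.rowLen x.1 : ℤ) - (x.2 + 1)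

/-- Leg length as an integer. -/
def legZ (Y : YoungDiagram) (x : ℕ × ℕ) : ℤ := (Y.colLen x.2 : ℤ) - (x.1 + 1)

/-- Exponent `(n−1, m)` of the MacMahon factor `(1 − k u^{n−1} v^m)⁻¹`, `x = (n−1, m−1)`. -/
def wMac (x : ℕ × ℕ) : ℤ × ℤ := ((x.1 : ℤ), (x.2 : ℤ) + 1)

/-- Exponent `(−a_μ(x)−1, −l_η(x))` of the factor attached to `x ∈ ℤ_{>0}²`. -/
def wLeft (μ η : YoungDiagram) (x : ℕ × ℕ) : ℤ × ℤ := (-armZ μ x - 1, -legZ η x)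

/-- Exponent `(a_η(x), l_μ(x)+1)` of the factor attached to a cell `x ∈ η`. -/
def wRight (μ η : YoungDiagram) (x : ℕ × ℕ) : ℤ × ℤ := (armZ η x, legZ μ x + 1)

/-- The index set for the coefficient of `k^{d₁+d₂} u^A v^B` on the left-hand side:
multisets of size `d₁` of MacMahon indices together with `d₂`-element subsets of
`ℤ_{>0}²`, of total exponent `(A,B)`. -/
def pairSet (μ η : YoungDiagram) (d₁ d₂ : ℕ) (A B : ℤ) :
    Set (Multiset (ℕ × ℕ) × Finset (ℕ × ℕ)) :=
  {p | Multiset.card p.1 = d₁ ∧ p.2.card = d₂ ∧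
    (p.1.map wMac).sum + ∑ x ∈ p.2, wLeft μ η x = (A, B)}

/-- Coefficient of `k^d u^A v^B` in
`M(k u⁻¹; u, v) · ∏_{(n,m)∈ℤ_{>0}²} (1 − k u^{−a_μ(n,m)−1} v^{−l_η(n,m)})`. -/
noncomputable def lhsCoeff (μ η : YoungDiagram) (d : ℕ) (A B : ℤ) : ℤ :=
  ∑ d₂ ∈ Finset.range (d + 1), (-1 : ℤ) ^ d₂ * (pairSet μ η (d - d₂) d₂ A B).ncard

/-- Coefficient of `k^d u^A v^B` in
`∏_{x∈μ} (1 − k u^{−a_μ(x)−1} v^{−l_η(x)}) · ∏_{z∈η} (1 − k u^{a_η(z)} v^{l_μ(z)+1})`. -/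
def rhsCoeff (μ η : YoungDiagram) (d : ℕ) (A B : ℤ) : ℤ :=
  (-1 : ℤ) ^ d *
    ((μ.cells.powerset ×ˢ η.cells.powerset).filter
      (fun p => p.1.card + p.2.card = d ∧
        (∑ x ∈ p.1, wLeft μ η x) + (∑ x ∈ p.2, wRight μ η x) = (A, B))).card

namespace CO1


def Rcount : List ℕ → ℤ → ℕ
  | [], _ => 0
  | x :: xs, C => (if (x:ℤ) = C + xs.length + 1 then 1 else 0) + Rcount xs C

lemma lemA (l : List ℕ) (C : ℤ) (hl : l.Pairwise (fun a b => b ≤ a)) (K : ℕ)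
    (hK : C + l.length < (K:ℤ)) :
    ((Finset.range K).filter
        (fun i : ℕ => (i:ℤ) - ((l.filter (fun a => a ≤ i)).length : ℤ) = C)).card
      = (if 0 ≤ C then 1 else 0) + Rcount l C := by
  induction l with
  | nil =>
      simp only [List.filter_nil, List.length_nil, Nat.cast_zero, sub_zero, Rcount, add_zero]
      simp only [List.length_nil, Nat.cast_zero, add_zero] at hK
      by_cases hC : 0 ≤ C
      · rw [if_pos hC]
        have : (Finset.range K).filter (fun i : ℕ => (i:ℤ) = C) = {C.toNat} := by
          ext i
          simp only [Finset.mem_filter, Finset.mem_range, Finset.mem_singleton]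
          omega
        rw [this]; simp
      · rw [if_neg hC]
        have : (Finset.range K).filter (fun i : ℕ => (i:ℤ) = C) = ∅ :=
          Finset.filter_eq_empty_iff.mpr (fun i _ => by omega)
        rw [this]; simp
  | cons x xs ih =>
      have hmax : ∀ y ∈ xs, y ≤ x := by
        intro y hy; exact (List.pairwise_cons.mp hl).1 y hy
      have hl' : xs.Pairwise (fun a b => b ≤ a) := (List.pairwise_cons.mp hl).2
      have hK' : C + xs.length < (K:ℤ) := by
        simp only [List.length_cons] at hK; push_cast at hK ⊢; omega
      have hK2 : C + xs.length + 1 < (K:ℤ) := by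
        simp only [List.length_cons] at hK; push_cast at hK ⊢; omega
      have ihc := ih hl' hK'
      set n := xs.length with hn
      -- lengths of filtered lists
      have hflen : ∀ i : ℕ, x ≤ i →
          ((xs.filter (fun a => a ≤ i)).length) = n := by
        intro i hi
        have : xs.filter (fun a => a ≤ i) = xs := by
          apply List.filter_eq_self.mpr
          intro y hy; simpa using le_trans (hmax y hy) hi
        rw [this]
      have hfcons : ∀ i : ℕ, ((x :: xs).filter (fun a => a ≤ i)) =
          if x ≤ i then x :: (xs.filter (fun a => a ≤ i)) else xs.filter (fun a => a ≤ i) := by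
        intro i
        by_cases h : x ≤ i
        · rw [if_pos h, List.filter_cons, if_pos (by simpa using h)]
        · rw [if_neg h, List.filter_cons, if_neg (by simpa using h)]
      set P : ℕ → Prop := fun i : ℕ => (i:ℤ) - (((x :: xs).filter (fun a => a ≤ i)).length : ℤ) = C with hP
      set Q : ℕ → Prop := fun i : ℕ => (i:ℤ) - ((xs.filter (fun a => a ≤ i)).length : ℤ) = C with hQ
      have splitP : ((Finset.range K).filter P).card
          = (((Finset.range K).filter P).filter (fun i => i < x)).card
            + (((Finset.range K).filter P).filter (fun i => ¬ i < x)).card := by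
        exact (Finset.card_filter_add_card_filter_not (fun i => i < x)).symm
      have splitQ : ((Finset.range K).filter Q).card
          = (((Finset.range K).filter Q).filter (fun i => i < x)).card
            + (((Finset.range K).filter Q).filter (fun i => ¬ i < x)).card := by
        exact (Finset.card_filter_add_card_filter_not (fun i => i < x)).symm
      have heq1 : ((Finset.range K).filter P).filter (fun i => i < x)
          = ((Finset.range K).filter Q).filter (fun i => i < x) := by
        rw [Finset.filter_filter, Finset.filter_filter]
        apply Finset.filter_congr
        intro i _
        constructor
        · rintro ⟨hPi, hix⟩
          refine ⟨?_, hix⟩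
          rw [hP] at hPi; rw [hQ]
          rwa [hfcons i, if_neg (by omega)] at hPi
        · rintro ⟨hQi, hix⟩
          refine ⟨?_, hix⟩
          show (i:ℤ) - (((x :: xs).filter (fun a => a ≤ i)).length : ℤ) = C
          rwa [hfcons i, if_neg (by omega)]
      have heq2 : ((Finset.range K).filter P).filter (fun i => ¬ i < x)
          = (Finset.range K).filter (fun i : ℕ => (i:ℤ) = C + n + 1 ∧ x ≤ i) := by
        rw [Finset.filter_filter]
        apply Finset.filter_congr
        intro i _
        constructor
        · rintro ⟨hPi, hix⟩
          have hxi : x ≤ i := by omega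
          rw [hP] at hPi
          rw [hfcons i, if_pos hxi] at hPi
          simp only [List.length_cons, hflen i hxi] at hPi
          push_cast at hPi
          exact ⟨by omega, hxi⟩
        · rintro ⟨hi, hxi⟩
          refine ⟨?_, by omega⟩
          show (i:ℤ) - (((x :: xs).filter (fun a => a ≤ i)).length : ℤ) = C
          rw [hfcons i, if_pos hxi]
          simp only [List.length_cons, hflen i hxi]
          push_cast
          omega
      have heq3 : ((Finset.range K).filter Q).filter (fun i => ¬ i < x)
          = (Finset.range K).filter (fun i : ℕ => (i:ℤ) = C + n ∧ x ≤ i) := by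
        rw [Finset.filter_filter]
        apply Finset.filter_congr
        intro i _
        constructor
        · rintro ⟨hQi, hix⟩
          have hxi : x ≤ i := by omega
          rw [hQ] at hQi
          rw [hflen i hxi] at hQi
          exact ⟨by omega, hxi⟩
        · rintro ⟨hi, hxi⟩
          refine ⟨?_, by omega⟩
          show (i:ℤ) - ((xs.filter (fun a => a ≤ i)).length : ℤ) = C
          rw [hflen i hxi]
          omega
      have hcard2 : ((Finset.range K).filter (fun i : ℕ => (i:ℤ) = C + n + 1 ∧ x ≤ i)).card
          = if (x:ℤ) ≤ C + n + 1 then 1 else 0 := by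
        by_cases hx : (x:ℤ) ≤ C + n + 1
        · rw [if_pos hx]
          have : (Finset.range K).filter (fun i : ℕ => (i:ℤ) = C + n + 1 ∧ x ≤ i)
              = {(C + n + 1).toNat} := by
            ext i
            simp only [Finset.mem_filter, Finset.mem_range, Finset.mem_singleton]
            omega
          rw [this]; simp
        · rw [if_neg hx]
          have : (Finset.range K).filter (fun i : ℕ => (i:ℤ) = C + n + 1 ∧ x ≤ i) = ∅ := by
            ext i
            simp only [Finset.mem_filter, Finset.mem_range, Finset.notMem_empty, iff_false]
            omega
          rw [this]; simp
      have hcard3 : ((Finset.range K).filter (fun i : ℕ => (i:ℤ) = C + n ∧ x ≤ i)).card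
          = if (x:ℤ) ≤ C + n then 1 else 0 := by
        by_cases hx : (x:ℤ) ≤ C + n
        · rw [if_pos hx]
          have : (Finset.range K).filter (fun i : ℕ => (i:ℤ) = C + n ∧ x ≤ i)
              = {(C + n).toNat} := by
            ext i
            simp only [Finset.mem_filter, Finset.mem_range, Finset.mem_singleton]
            omega
          rw [this]; simp
        · rw [if_neg hx]
          have : (Finset.range K).filter (fun i : ℕ => (i:ℤ) = C + n ∧ x ≤ i) = ∅ := by
            ext i
            simp only [Finset.mem_filter, Finset.mem_range, Finset.notMem_empty, iff_false]
            omega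
          rw [this]; simp
      rw [splitP, heq1, heq2, hcard2]
      rw [splitQ, heq3, hcard3] at ihc
      show _ = (if 0 ≤ C then 1 else 0) + ((if (x:ℤ) = C + n + 1 then 1 else 0) + Rcount xs C)
      split_ifs at ihc ⊢ <;> omega


lemma lemB (g : ℕ → ℕ) (C : ℤ) (N : ℕ) :
    Rcount (((List.range N).map g).reverse) C
      = ((Finset.range N).filter (fun r : ℕ => (g r : ℤ) - r = C + 1)).card := by
  induction N with
  | zero => simp [Rcount]
  | succ N ih =>
      rw [List.range_succ, List.map_append, List.reverse_append]
      simp only [List.map_cons, List.map_nil, List.reverse_cons, List.reverse_nil,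
        List.nil_append, List.singleton_append]
      show (if (g N : ℤ) = C + (((List.range N).map g).reverse).length + 1 then 1 else 0)
          + Rcount (((List.range N).map g).reverse) C = _
      rw [Finset.range_add_one, Finset.filter_insert]
      by_cases h : (g N : ℤ) - N = C + 1
      · rw [if_pos h, Finset.card_insert_of_notMem (by simp), ih]
        rw [if_pos (by simp; omega)]
        omega
      · rw [if_neg h, ih, if_neg (by simp; omega)]
        omega


lemma length_filter_range (p : ℕ → Bool) (N : ℕ) :
    ((List.range N).filter p).length = ((Finset.range N).filter (fun r => p r = true)).card := by
  induction N with
  | zero => simp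
  | succ N ih =>
      rw [List.range_succ, List.filter_append, List.length_append, Finset.range_add_one,
        Finset.filter_insert]
      by_cases h : p N = true
      · rw [if_pos h, Finset.card_insert_of_notMem (by simp)]
        simp [h, ih]
      · rw [if_neg h]
        simp [h, ih]

lemma wLeft_eq (μ η : YoungDiagram) (i j : ℕ) :
    wLeft μ η (i, j) = ((j : ℤ) - μ.rowLen i, (i : ℤ) + 1 - η.colLen j) := by
  simp only [wLeft, armZ, legZ, Prod.mk.injEq]
  constructor <;> ring

lemma wRight_eq (μ η : YoungDiagram) (i j : ℕ) :
    wRight μ η (i, j) = ((η.rowLen i : ℤ) - (j + 1), (μ.colLen j : ℤ) - i) := by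
  simp only [wRight, armZ, legZ, Prod.mk.injEq]
  exact ⟨trivial, by ring⟩

lemma etaFiber_finite (μ η : YoungDiagram) (a b : ℤ) :
    {z : ℕ × ℕ | z ∈ η ∧ wRight μ η z = (a, b)}.Finite :=
  Set.Finite.subset η.cells.finite_toSet (fun z hz => by simpa using hz.1)

lemma leftFiber (μ η : YoungDiagram) (a b : ℤ) :
    {x : ℕ × ℕ | x ∉ μ ∧ wLeft μ η x = (a, b)}.Finite ∧
    {x : ℕ × ℕ | x ∉ μ ∧ wLeft μ η x = (a, b)}.ncard
      = (if 0 ≤ a ∧ 1 ≤ b then 1 else 0)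
        + {z : ℕ × ℕ | z ∈ η ∧ wRight μ η z = (a, b)}.ncard := by
  by_cases ha : 0 ≤ a
  case neg =>
    have h1 : {x : ℕ × ℕ | x ∉ μ ∧ wLeft μ η x = (a, b)} = ∅ := by
      ext ⟨i, j⟩
      simp only [Set.mem_setOf_eq, Set.mem_empty_iff_false, iff_false, not_and]
      intro hx
      rw [YoungDiagram.mem_iff_lt_rowLen, not_lt] at hx
      rw [wLeft_eq, Prod.mk.injEq]
      rintro ⟨h1, -⟩
      omega
    have h2 : {z : ℕ × ℕ | z ∈ η ∧ wRight μ η z = (a, b)} = ∅ := by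
      ext ⟨i, j⟩
      simp only [Set.mem_setOf_eq, Set.mem_empty_iff_false, iff_false, not_and]
      intro hz
      rw [YoungDiagram.mem_iff_lt_rowLen] at hz
      rw [wRight_eq, Prod.mk.injEq]
      rintro ⟨h1, -⟩
      omega
    rw [h1, h2]
    simp [ha]
  case pos =>
    set a' := a.toNat with ha'
    have haa : (a' : ℤ) = a := Int.toNat_of_nonneg ha
    set N := η.colLen a' with hN
    set gfun : ℕ → ℕ := fun r => μ.colLen (η.rowLen r - 1 - a') with hg
    set l : List ℕ := ((List.range N).map gfun).reverse with hl
    -- l is nonincreasing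
    have hpair : l.Pairwise (fun u v => v ≤ u) := by
      rw [hl, List.pairwise_reverse, List.pairwise_map]
      have : (List.range N).Pairwise (· < ·) := List.pairwise_lt_range
      apply List.Pairwise.imp_of_mem (l := List.range N) ?_ this
      intro u v _ _ huv
      apply YoungDiagram.colLen_anti
      have : η.rowLen v ≤ η.rowLen u := η.rowLen_anti u v (le_of_lt huv)
      omega
    -- length of filters computes colLen
    have hlen : ∀ i : ℕ, ((l.filter (fun v => v ≤ i)).length)
        = η.colLen (μ.rowLen i + a') := by
      intro i
      have h1 : (l.filter (fun v => v ≤ i)).length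
          = (((List.range N).map gfun).filter (fun v => v ≤ i)).length := by
        rw [hl, List.filter_reverse, List.length_reverse]
      rw [h1, List.filter_map, List.length_map, length_filter_range]
      have hGN : η.colLen (μ.rowLen i + a') ≤ N := by
        rw [hN]; exact η.colLen_anti _ _ (by omega)
      have hiff : ∀ r ∈ Finset.range N,
          ((fun v => decide (v ≤ i)) ∘ gfun) r = true ↔ r < η.colLen (μ.rowLen i + a') := by
        intro r hr
        rw [Finset.mem_range] at hr
        have hrN : a' < η.rowLen r := by
          rwa [← YoungDiagram.mem_iff_lt_colLen, YoungDiagram.mem_iff_lt_rowLen] at hr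
        simp only [Function.comp_apply, decide_eq_true_eq]
        show μ.colLen (η.rowLen r - 1 - a') ≤ i ↔ _
        constructor
        · intro hle
          have h1 : ¬ ((i, η.rowLen r - 1 - a') ∈ μ) := by
            rw [YoungDiagram.mem_iff_lt_colLen]; omega
          rw [YoungDiagram.mem_iff_lt_rowLen, not_lt] at h1
          have h2 : (r, μ.rowLen i + a') ∈ η := by
            rw [YoungDiagram.mem_iff_lt_rowLen]; omega
          rwa [YoungDiagram.mem_iff_lt_colLen] at h2
        · intro hlt
          have h1 : (r, μ.rowLen i + a') ∈ η := by
            rw [YoungDiagram.mem_iff_lt_colLen]; exact hlt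
          rw [YoungDiagram.mem_iff_lt_rowLen] at h1
          have h2 : ¬ ((i, η.rowLen r - 1 - a') ∈ μ) := by
            rw [YoungDiagram.mem_iff_lt_rowLen]; omega
          rw [YoungDiagram.mem_iff_lt_colLen, not_lt] at h2
          exact h2
      rw [Finset.filter_congr hiff]
      have : (Finset.range N).filter (fun r => r < η.colLen (μ.rowLen i + a'))
          = Finset.range (η.colLen (μ.rowLen i + a')) := by
        ext r
        simp only [Finset.mem_filter, Finset.mem_range]
        omega
      rw [this, Finset.card_range]
    -- the left fiber as an image
    set Iset : Set ℕ := {i : ℕ | (i:ℤ) - ((l.filter (fun v => v ≤ i)).length : ℤ) = b - 1}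
      with hIset
    have himg : {x : ℕ × ℕ | x ∉ μ ∧ wLeft μ η x = (a, b)}
        = (fun i : ℕ => (i, μ.rowLen i + a')) '' Iset := by
      ext ⟨i, j⟩
      simp only [Set.mem_setOf_eq, Set.mem_image, hIset]
      constructor
      · rintro ⟨hx, hw⟩
        rw [YoungDiagram.mem_iff_lt_rowLen, not_lt] at hx
        rw [wLeft_eq, Prod.mk.injEq] at hw
        obtain ⟨h1, h2⟩ := hw
        refine ⟨i, ?_, ?_⟩
        · rw [hlen i]
          have : j = μ.rowLen i + a' := by omega
          rw [← this]
          omega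
        · have : j = μ.rowLen i + a' := by omega
          rw [this]
      · rintro ⟨i', hi', heq⟩
        injection heq with h1 h2
        subst h1
        subst h2
        rw [hlen] at hi'
        constructor
        · rw [YoungDiagram.mem_iff_lt_rowLen]; omega
        · rw [wLeft_eq, Prod.mk.injEq]
          constructor
          · push_cast; omega
          · push_cast at hi' ⊢; omega
    -- Iset as a finset
    set K : ℕ := (b - 1 + l.length).toNat + 1 with hK
    have hKb : b - 1 + l.length < (K : ℤ) := by
      rw [hK]
      push_cast
      have := Int.self_le_toNat (b - 1 + l.length)
      omega
    have hIfin : Iset = ↑((Finset.range K).filter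
        (fun i : ℕ => (i:ℤ) - ((l.filter (fun v => v ≤ i)).length : ℤ) = b - 1)) := by
      ext i
      simp only [hIset, Set.mem_setOf_eq, Finset.coe_filter, Finset.mem_range]
      constructor
      · intro h
        refine ⟨?_, h⟩
        have hle : (l.filter (fun v => v ≤ i)).length ≤ l.length :=
          List.length_filter_le _ _
        omega
      · exact fun h => h.2
    -- the eta fiber as an image
    have himg2 : {z : ℕ × ℕ | z ∈ η ∧ wRight μ η z = (a, b)}
        = (fun r : ℕ => (r, η.rowLen r - 1 - a')) ''
          ↑((Finset.range N).filter (fun r : ℕ => (gfun r : ℤ) - r = b)) := by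
      ext ⟨r, c⟩
      simp only [Set.mem_setOf_eq, Set.mem_image, Finset.coe_filter, Finset.mem_range]
      constructor
      · rintro ⟨hz, hw⟩
        rw [YoungDiagram.mem_iff_lt_rowLen] at hz
        rw [wRight_eq, Prod.mk.injEq] at hw
        obtain ⟨h1, h2⟩ := hw
        have hc : c = η.rowLen r - 1 - a' := by omega
        refine ⟨r, ⟨?_, ?_⟩, ?_⟩
        · have h3 : (r, a') ∈ η := by
            rw [YoungDiagram.mem_iff_lt_rowLen]; omega
          rwa [YoungDiagram.mem_iff_lt_colLen] at h3
        · show (μ.colLen (η.rowLen r - 1 - a') : ℤ) - r = b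
          rw [← hc]; omega
        · show (r, η.rowLen r - 1 - a') = (r, c)
          rw [hc]
      · rintro ⟨r', ⟨hr', hcond⟩, heq⟩
        injection heq with h1 h2
        subst h1
        subst h2
        have hrN : a' < η.rowLen r' := by
          have h3 : (r', a') ∈ η := by
            rwa [YoungDiagram.mem_iff_lt_colLen]
          rwa [YoungDiagram.mem_iff_lt_rowLen] at h3
        have hcond2 : (μ.colLen (η.rowLen r' - 1 - a') : ℤ) - r' = b := hcond
        constructor
        · rw [YoungDiagram.mem_iff_lt_rowLen]; omega
        · rw [wRight_eq, Prod.mk.injEq]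
          constructor
          · push_cast; omega
          · push_cast at hcond2 ⊢; omega
    have hinj1 : Function.Injective (fun i : ℕ => (i, μ.rowLen i + a')) := by
      intro u v huv
      exact congrArg Prod.fst huv
    have hinj2 : Function.Injective (fun r : ℕ => (r, η.rowLen r - 1 - a')) := by
      intro u v huv
      exact congrArg Prod.fst huv
    constructor
    · rw [himg, hIfin]
      exact (Finset.finite_toSet _).image _
    · rw [himg, hIfin, himg2, Set.ncard_image_of_injective _ hinj1,
        Set.ncard_image_of_injective _ hinj2, Set.ncard_coe_finset, Set.ncard_coe_finset]
      have hmain := lemA l (b - 1) hpair K hKb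
      rw [hmain, lemB gfun (b - 1) N]
      have hb1 : ((if 0 ≤ b - 1 then 1 else 0) : ℕ) = (if 0 ≤ a ∧ 1 ≤ b then 1 else 0) := by
        split_ifs with h1 h2 h2 <;> omega
      rw [hb1]
      congr 2
      apply Finset.filter_congr
      intro r _
      constructor <;> intro h <;> omega


section Phi

variable (μ η : YoungDiagram)

/-- complement cells -/
abbrev XT := {x : ℕ × ℕ // x ∉ μ}

abbrev YT := (ℕ × ℕ) ⊕ {z : ℕ × ℕ // z ∈ η}

def wX (x : XT μ) : ℤ × ℤ := wLeft μ η x.val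

def wY : YT η → ℤ × ℤ := Sum.elim wMac (fun z => wRight μ η z.val)

lemma macFiber (c : ℤ × ℤ) :
    {y : ℕ × ℕ | wMac y = c}.Finite ∧
    {y : ℕ × ℕ | wMac y = c}.ncard = (if 0 ≤ c.1 ∧ 1 ≤ c.2 then 1 else 0) := by
  by_cases hc : 0 ≤ c.1 ∧ 1 ≤ c.2
  · have : {y : ℕ × ℕ | wMac y = c} = {(c.1.toNat, (c.2 - 1).toNat)} := by
      ext ⟨y1, y2⟩
      simp only [Set.mem_setOf_eq, Set.mem_singleton_iff, wMac, Prod.mk.injEq, Prod.ext_iff]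
      constructor
      · rintro ⟨h1, h2⟩; constructor <;> omega
      · rintro ⟨h1, h2⟩
        subst h1; subst h2
        constructor <;> omega
    rw [this, if_pos hc]
    exact ⟨Set.finite_singleton _, Set.ncard_singleton _⟩
  · have : {y : ℕ × ℕ | wMac y = c} = ∅ := by
      ext ⟨y1, y2⟩
      simp only [Set.mem_setOf_eq, Set.mem_empty_iff_false, iff_false, wMac, Prod.ext_iff]
      rintro ⟨h1, h2⟩
      apply hc
      omega
    rw [this, if_neg hc]
    simp

noncomputable instance fintypeFiberX (c : ℤ × ℤ) : Finite {x : XT μ // wX μ η x = c} := by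
  have e : {x : XT μ // wX μ η x = c} ≃ {p : ℕ × ℕ // p ∉ μ ∧ wLeft μ η p = c} :=
    { toFun := fun x => ⟨x.1.1, x.1.2, x.2⟩
      invFun := fun p => ⟨⟨p.1, p.2.1⟩, p.2.2⟩
      left_inv := fun _ => rfl
      right_inv := fun _ => rfl }
  have hfin : {p : ℕ × ℕ | p ∉ μ ∧ wLeft μ η p = (c.1, c.2)}.Finite := (leftFiber μ η c.1 c.2).1
  have : Finite {p : ℕ × ℕ // p ∉ μ ∧ wLeft μ η p = c} := hfin.to_subtype
  exact Finite.of_equiv _ e.symm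

noncomputable instance fintypeFiberY (c : ℤ × ℤ) : Finite {y : YT η // wY μ η y = c} := by
  have e : {y : YT η // wY μ η y = c}
      ≃ {a : ℕ × ℕ // wMac a = c} ⊕ {b : {z : ℕ × ℕ // z ∈ η} // wRight μ η b.val = c} :=
    Equiv.subtypeSum
  have h1 : Finite {a : ℕ × ℕ // wMac a = c} := (macFiber c).1.to_subtype
  have h2 : Finite {b : {z : ℕ × ℕ // z ∈ η} // wRight μ η b.val = c} := by
    have e2 : {b : {z : ℕ × ℕ // z ∈ η} // wRight μ η b.val = c}
        ≃ {p : ℕ × ℕ // p ∈ η ∧ wRight μ η p = c} :=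
      { toFun := fun x => ⟨x.1.1, x.1.2, x.2⟩
        invFun := fun p => ⟨⟨p.1, p.2.1⟩, p.2.2⟩
        left_inv := fun _ => rfl
        right_inv := fun _ => rfl }
    have : Finite {p : ℕ × ℕ // p ∈ η ∧ wRight μ η p = c} :=
      (etaFiber_finite μ η c.1 c.2).to_subtype
    exact Finite.of_equiv _ e2.symm
  exact Finite.of_equiv _ e.symm

lemma fiber_card_eq (c : ℤ × ℤ) :
    Nat.card {x : XT μ // wX μ η x = c} = Nat.card {y : YT η // wY μ η y = c} := by
  have e1 : {x : XT μ // wX μ η x = c} ≃ {p : ℕ × ℕ // p ∉ μ ∧ wLeft μ η p = c} :=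
    { toFun := fun x => ⟨x.1.1, x.1.2, x.2⟩
      invFun := fun p => ⟨⟨p.1, p.2.1⟩, p.2.2⟩
      left_inv := fun _ => rfl
      right_inv := fun _ => rfl }
  have e : {y : YT η // wY μ η y = c}
      ≃ {a : ℕ × ℕ // wMac a = c} ⊕ {b : {z : ℕ × ℕ // z ∈ η} // wRight μ η b.val = c} :=
    Equiv.subtypeSum
  have e2 : {b : {z : ℕ × ℕ // z ∈ η} // wRight μ η b.val = c}
      ≃ {p : ℕ × ℕ // p ∈ η ∧ wRight μ η p = c} :=
    { toFun := fun x => ⟨x.1.1, x.1.2, x.2⟩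
      invFun := fun p => ⟨⟨p.1, p.2.1⟩, p.2.2⟩
      left_inv := fun _ => rfl
      right_inv := fun _ => rfl }
  have h1 : Finite {a : ℕ × ℕ // wMac a = c} := (macFiber c).1.to_subtype
  have h2 : Finite {p : ℕ × ℕ // p ∈ η ∧ wRight μ η p = c} :=
    (etaFiber_finite μ η c.1 c.2).to_subtype
  have h2' : Finite {b : {z : ℕ × ℕ // z ∈ η} // wRight μ η b.val = c} :=
    Finite.of_equiv _ e2.symm
  rw [Nat.card_congr e1, Nat.card_congr e, Nat.card_sum, Nat.card_congr e2]
  have hL : Nat.card {p : ℕ × ℕ // p ∉ μ ∧ wLeft μ η p = c}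
      = {p : ℕ × ℕ | p ∉ μ ∧ wLeft μ η p = (c.1, c.2)}.ncard := by
    rw [← Nat.card_coe_set_eq]
    congr 1
  have hM : Nat.card {a : ℕ × ℕ // wMac a = c} = {y : ℕ × ℕ | wMac y = c}.ncard := by
    rw [← Nat.card_coe_set_eq]
    congr 1
  have hR : Nat.card {p : ℕ × ℕ // p ∈ η ∧ wRight μ η p = c}
      = {z : ℕ × ℕ | z ∈ η ∧ wRight μ η z = (c.1, c.2)}.ncard := by
    rw [← Nat.card_coe_set_eq]
    congr 1
  rw [hL, hM, hR, (leftFiber μ η c.1 c.2).2, (macFiber c).2]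

noncomputable def phi : XT μ ≃ YT η :=
  (Equiv.sigmaFiberEquiv (wX μ η)).symm.trans
    ((Equiv.sigmaCongrRight (fun c =>
        Classical.choice ((Finite.card_eq).mp (fiber_card_eq μ η c)))).trans
      (Equiv.sigmaFiberEquiv (wY μ η)))

lemma wY_phi (x : XT μ) : wY μ η (phi μ η x) = wX μ η x := by
  show wY μ η ((Equiv.sigmaFiberEquiv (wY μ η))
      ((Equiv.sigmaCongrRight (fun c =>
        Classical.choice ((Finite.card_eq).mp (fiber_card_eq μ η c))))
        ((Equiv.sigmaFiberEquiv (wX μ η)).symm x))) = wX μ η x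
  rcases h : (Equiv.sigmaFiberEquiv (wX μ η)).symm x with ⟨c, v⟩
  have hc : c = wX μ η x := by
    have := congrArg (fun s => s.1) h
    simpa [Equiv.sigmaFiberEquiv] using this.symm
  subst hc
  simp only [Equiv.sigmaCongrRight, Equiv.sigmaFiberEquiv, Equiv.coe_fn_mk]
  exact (Classical.choice ((Finite.card_eq).mp (fiber_card_eq μ η (wX μ η x))) v).2

lemma wX_phi_symm (y : YT η) : wX μ η ((phi μ η).symm y) = wY μ η y := by
  have := wY_phi μ η ((phi μ η).symm y)
  rw [Equiv.apply_symm_apply] at this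
  exact this.symm

end Phi


section Main

variable (μ η : YoungDiagram) (d : ℕ) (A B : ℤ)

lemma bound_one (T : Multiset ℤ) (c : ℤ) (hc : 0 ≤ c) (hlb : ∀ z ∈ T, -c ≤ z)
    (hcard : (Multiset.card T : ℤ) ≤ d) {S : ℤ} (hS : T.sum = S) :
    ∀ y ∈ T, y ≤ S + c * d := by
  intro y hy
  obtain ⟨T', rfl⟩ := Multiset.exists_cons_of_mem hy
  have h1 : (Multiset.card T') • (-c) ≤ T'.sum :=
    Multiset.card_nsmul_le_sum (fun z hz => hlb z (Multiset.mem_cons_of_mem hz))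
  rw [Multiset.sum_cons] at hS
  rw [nsmul_eq_mul] at h1
  have h2 : (Multiset.card T' : ℤ) ≤ d := by
    rw [Multiset.card_cons] at hcard; push_cast at hcard ⊢; omega
  have h3 : (Multiset.card T' : ℤ) * (-c) ≥ (d : ℤ) * (-c) := by
    apply mul_le_mul_of_nonpos_right h2 (by omega)
  nlinarith [h1, h3]

lemma lb_one (T : Multiset ℤ) (c : ℤ) (hlb : ∀ z ∈ T, -c ≤ z)
    (hcard : (Multiset.card T : ℤ) ≤ d) (hc : 0 ≤ c) {S : ℤ} (hS : T.sum = S) :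
    -(d : ℤ) * c ≤ S := by
  have h1 : (Multiset.card T) • (-c) ≤ T.sum := Multiset.card_nsmul_le_sum hlb
  rw [nsmul_eq_mul] at h1
  nlinarith [h1]

-- lower bounds on weights
lemma wMac_lb (y : ℕ × ℕ) : 0 ≤ (wMac y).1 ∧ 1 ≤ (wMac y).2 := by
  simp [wMac]

lemma wLeft_lb (x : ℕ × ℕ) :
    -(μ.rowLen 0 : ℤ) ≤ (wLeft μ η x).1 ∧ -(η.colLen 0 : ℤ) ≤ (wLeft μ η x).2 := by
  obtain ⟨i, j⟩ := x
  rw [wLeft_eq]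
  have h1 : μ.rowLen i ≤ μ.rowLen 0 := μ.rowLen_anti 0 i (Nat.zero_le i)
  have h2 : η.colLen j ≤ η.colLen 0 := η.colLen_anti 0 j (Nat.zero_le j)
  constructor <;> simp only [] <;> omega

lemma wRight_lb (z : ℕ × ℕ) (hz : z ∈ η) :
    0 ≤ (wRight μ η z).1 ∧ -(η.colLen 0 : ℤ) ≤ (wRight μ η z).2 := by
  obtain ⟨i, j⟩ := z
  rw [wRight_eq]
  have h1 : j < η.rowLen i := by rwa [← YoungDiagram.mem_iff_lt_rowLen]
  have h2 : i < η.colLen j := by rwa [YoungDiagram.mem_iff_lt_colLen] at hz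
  have h3 : η.colLen j ≤ η.colLen 0 := η.colLen_anti 0 j (Nat.zero_le j)
  constructor <;> simp only [] <;> omega

def U1 : ℤ := A + (μ.rowLen 0 : ℤ) * d
def U2 : ℤ := B + (η.colLen 0 : ℤ) * d

def macBox : Finset (ℕ × ℕ) :=
  Finset.range ((U1 μ d A).toNat + 1) ×ˢ Finset.range ((U2 η d B).toNat + 1)

def leftBox : Finset (ℕ × ℕ) :=
  Finset.range ((U2 η d B + η.colLen 0).toNat + 1) ×ˢ
    Finset.range ((U1 μ d A + μ.rowLen 0).toNat + 1)

lemma mem_macBox_of_le {y : ℕ × ℕ} (h1 : (wMac y).1 ≤ U1 μ d A) (h2 : (wMac y).2 ≤ U2 η d B) :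
    y ∈ macBox μ η d A B := by
  obtain ⟨y1, y2⟩ := y
  simp only [wMac] at h1 h2
  simp only [macBox, Finset.mem_product, Finset.mem_range]
  constructor <;> omega

lemma mem_leftBox_of_le {x : ℕ × ℕ} (h1 : (wLeft μ η x).1 ≤ U1 μ d A)
    (h2 : (wLeft μ η x).2 ≤ U2 η d B) : x ∈ leftBox μ η d A B := by
  obtain ⟨i, j⟩ := x
  rw [wLeft_eq] at h1 h2
  simp only at h1 h2
  have hr : μ.rowLen i ≤ μ.rowLen 0 := μ.rowLen_anti 0 i (Nat.zero_le i)
  have hc : η.colLen j ≤ η.colLen 0 := η.colLen_anti 0 j (Nat.zero_le j)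
  simp only [leftBox, Finset.mem_product, Finset.mem_range]
  constructor <;> omega

-- the combined first/second coordinate multisets for a pairSet element
lemma fst_multiset_sum (T : Multiset (ℤ × ℤ)) : T.sum.1 = (T.map Prod.fst).sum := by
  induction T using Multiset.induction_on with
  | empty => simp
  | cons a T ih => simp [ih]

lemma snd_multiset_sum (T : Multiset (ℤ × ℤ)) : T.sum.2 = (T.map Prod.snd).sum := by
  induction T using Multiset.induction_on with
  | empty => simp
  | cons a T ih => simp [ih]

lemma pairSet_weights {d₁ d₂ : ℕ} (hd : d₁ + d₂ = d) {p : Multiset (ℕ × ℕ) × Finset (ℕ × ℕ)}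
    (hp : p ∈ pairSet μ η d₁ d₂ A B) :
    (∀ y ∈ p.1, y ∈ macBox μ η d A B) ∧ (∀ x ∈ p.2, x ∈ leftBox μ η d A B) := by
  obtain ⟨hm, he, hsum⟩ := hp
  set m := p.1
  set e := p.2
  have hfst : ((m.map (fun y => (wMac y).1)) + (e.val.map (fun x => (wLeft μ η x).1))).sum
      = A := by
    rw [Multiset.sum_add]
    have h1 : ((m.map wMac).sum).1 = (m.map (fun y => (wMac y).1)).sum := by
      rw [fst_multiset_sum, Multiset.map_map]
      rfl
    have h2 : (∑ x ∈ e, wLeft μ η x).1 = (e.val.map (fun x => (wLeft μ η x).1)).sum := by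
      rw [Prod.fst_sum]; rfl
    have := congrArg Prod.fst hsum
    simp only [Prod.fst_add] at this
    rw [h1, h2] at this
    exact this
  have hsnd : ((m.map (fun y => (wMac y).2)) + (e.val.map (fun x => (wLeft μ η x).2))).sum
      = B := by
    rw [Multiset.sum_add]
    have h1 : ((m.map wMac).sum).2 = (m.map (fun y => (wMac y).2)).sum := by
      rw [snd_multiset_sum, Multiset.map_map]
      rfl
    have h2 : (∑ x ∈ e, wLeft μ η x).2 = (e.val.map (fun x => (wLeft μ η x).2)).sum := by
      rw [Prod.snd_sum]; rfl
    have := congrArg Prod.snd hsum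
    simp only [Prod.snd_add] at this
    rw [h1, h2] at this
    exact this
  have hcard : (Multiset.card ((m.map (fun y => (wMac y).1))
      + (e.val.map (fun x => (wLeft μ η x).1))) : ℤ) ≤ d := by
    simp only [Multiset.card_add, Multiset.card_map]
    have : Multiset.card e.val = e.card := rfl
    push_cast [this, hm, he]
    omega
  have hcard2 : (Multiset.card ((m.map (fun y => (wMac y).2))
      + (e.val.map (fun x => (wLeft μ η x).2))) : ℤ) ≤ d := by
    simp only [Multiset.card_add, Multiset.card_map]
    have : Multiset.card e.val = e.card := rfl
    push_cast [this, hm, he]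
    omega
  have hlb1 : ∀ z ∈ (m.map (fun y => (wMac y).1)) + (e.val.map (fun x => (wLeft μ η x).1)),
      -(μ.rowLen 0 : ℤ) ≤ z := by
    intro z hz
    rw [Multiset.mem_add] at hz
    rcases hz with hz | hz
    · obtain ⟨y, _, rfl⟩ := Multiset.mem_map.mp hz
      have := (wMac_lb y).1
      have : (0:ℤ) ≤ (μ.rowLen 0 : ℤ) := by positivity
      omega
    · obtain ⟨x, _, rfl⟩ := Multiset.mem_map.mp hz
      exact (wLeft_lb μ η x).1
  have hlb2 : ∀ z ∈ (m.map (fun y => (wMac y).2)) + (e.val.map (fun x => (wLeft μ η x).2)),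
      -(η.colLen 0 : ℤ) ≤ z := by
    intro z hz
    rw [Multiset.mem_add] at hz
    rcases hz with hz | hz
    · obtain ⟨y, _, rfl⟩ := Multiset.mem_map.mp hz
      have h := (wMac_lb y).2
      have : (0:ℤ) ≤ (η.colLen 0 : ℤ) := by positivity
      omega
    · obtain ⟨x, _, rfl⟩ := Multiset.mem_map.mp hz
      exact (wLeft_lb μ η x).2
  have hB1 := bound_one d _ (μ.rowLen 0 : ℤ) (by positivity) hlb1 hcard hfst
  have hB2 := bound_one d _ (η.colLen 0 : ℤ) (by positivity) hlb2 hcard2 hsnd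
  constructor
  · intro y hy
    apply mem_macBox_of_le
    · exact hB1 _ (Multiset.mem_add.mpr (Or.inl (Multiset.mem_map_of_mem _ hy)))
    · exact hB2 _ (Multiset.mem_add.mpr (Or.inl (Multiset.mem_map_of_mem _ hy)))
  · intro x hx
    have hx' : x ∈ e.val := hx
    apply mem_leftBox_of_le
    · exact hB1 _ (Multiset.mem_add.mpr (Or.inr (Multiset.mem_map_of_mem _ hx')))
    · exact hB2 _ (Multiset.mem_add.mpr (Or.inr (Multiset.mem_map_of_mem _ hx')))

lemma multiset_sub_finite (s : Finset (ℕ × ℕ)) (n : ℕ) :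
    {m : Multiset (ℕ × ℕ) | Multiset.card m ≤ n ∧ ∀ y ∈ m, y ∈ s}.Finite := by
  apply Set.Finite.subset ((n • s.val).powerset.toFinset.finite_toSet)
  intro m hm
  obtain ⟨hcard, hmem⟩ := hm
  simp only [Finset.mem_coe, Multiset.mem_toFinset, Multiset.mem_powerset]
  rw [Multiset.le_iff_count]
  intro y
  rw [Multiset.count_nsmul]
  by_cases hy : y ∈ m
  · have h1 : Multiset.count y m ≤ Multiset.card m := Multiset.count_le_card y m
    have h2 : 1 ≤ Multiset.count y s.val := by
      rw [Multiset.one_le_count_iff_mem]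
      exact hmem y hy
    calc Multiset.count y m ≤ n := le_trans h1 hcard
      _ ≤ n * Multiset.count y s.val := by nlinarith
  · simp [Multiset.count_eq_zero_of_notMem hy]

lemma pairSet_finite {d₁ d₂ : ℕ} (hd : d₁ + d₂ = d) :
    (pairSet μ η d₁ d₂ A B).Finite := by
  apply Set.Finite.subset
    (Set.Finite.prod (multiset_sub_finite (macBox μ η d A B) d)
      ((leftBox μ η d A B).powerset.finite_toSet))
  rintro ⟨m, e⟩ hp
  have hw := pairSet_weights μ η d A B hd hp
  obtain ⟨hm, he, -⟩ := hp
  constructor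
  · exact ⟨by omega, hw.1⟩
  · simp only [Finset.mem_coe, Finset.mem_powerset]
    intro x hx
    exact hw.2 x hx


abbrev QT := Multiset (ℕ × ℕ) × Finset (ℕ × ℕ) × Finset (ℕ × ℕ) × Finset (ℕ × ℕ)

def QSet : Set QT :=
  {q | q.2.2.1 ⊆ μ.cells ∧ q.2.2.2 ⊆ η.cells ∧
    Multiset.card q.1 + q.2.1.card + q.2.2.1.card + q.2.2.2.card = d ∧
    (q.1.map wMac).sum + (∑ y ∈ q.2.1, wMac y) + (∑ x ∈ q.2.2.1, wLeft μ η x)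
      + (∑ z ∈ q.2.2.2, wRight μ η z) = (A, B)}

lemma QSet_weights {q : QT} (hq : q ∈ QSet μ η d A B) :
    (∀ y ∈ q.1, y ∈ macBox μ η d A B) ∧ (∀ y ∈ q.2.1, y ∈ macBox μ η d A B) := by
  obtain ⟨m, f, st, t⟩ := q
  obtain ⟨hs, ht, hcard, hsum⟩ := hq
  dsimp only at hs ht hcard hsum ⊢
  -- combined coordinate multisets
  set T1 : Multiset ℤ := m.map (fun y => (wMac y).1) + f.val.map (fun y => (wMac y).1)
    + st.val.map (fun x => (wLeft μ η x).1) + t.val.map (fun z => (wRight μ η z).1) with hT1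
  set T2 : Multiset ℤ := m.map (fun y => (wMac y).2) + f.val.map (fun y => (wMac y).2)
    + st.val.map (fun x => (wLeft μ η x).2) + t.val.map (fun z => (wRight μ η z).2) with hT2
  have hfst : T1.sum = A := by
    rw [hT1]
    simp only [Multiset.sum_add]
    have h1 : ((m.map wMac).sum).1 = (m.map (fun y => (wMac y).1)).sum := by
      rw [fst_multiset_sum, Multiset.map_map]; rfl
    have := congrArg Prod.fst hsum
    simp only [Prod.fst_add, Prod.fst_sum] at this
    rw [h1] at this
    convert this using 2 <;> rfl
  have hsnd : T2.sum = B := by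
    rw [hT2]
    simp only [Multiset.sum_add]
    have h1 : ((m.map wMac).sum).2 = (m.map (fun y => (wMac y).2)).sum := by
      rw [snd_multiset_sum, Multiset.map_map]; rfl
    have := congrArg Prod.snd hsum
    simp only [Prod.snd_add, Prod.snd_sum] at this
    rw [h1] at this
    convert this using 2 <;> rfl
  have hc1 : (Multiset.card T1 : ℤ) ≤ d := by
    rw [hT1]
    simp only [Multiset.card_add, Multiset.card_map]
    have e1 : Multiset.card f.val = f.card := rfl
    have e2 : Multiset.card st.val = st.card := rfl
    have e3 : Multiset.card t.val = t.card := rfl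
    rw [e1, e2, e3]
    push_cast
    omega
  have hc2 : (Multiset.card T2 : ℤ) ≤ d := by
    rw [hT2]
    simp only [Multiset.card_add, Multiset.card_map]
    have e1 : Multiset.card f.val = f.card := rfl
    have e2 : Multiset.card st.val = st.card := rfl
    have e3 : Multiset.card t.val = t.card := rfl
    rw [e1, e2, e3]
    push_cast
    omega
  have hlb1 : ∀ z ∈ T1, -(μ.rowLen 0 : ℤ) ≤ z := by
    intro z hz
    rw [hT1] at hz
    have hnn : (0:ℤ) ≤ (μ.rowLen 0 : ℤ) := by positivity
    simp only [Multiset.mem_add] at hz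
    rcases hz with ((hz | hz) | hz) | hz
    · obtain ⟨y, -, rfl⟩ := Multiset.mem_map.mp hz
      have := (wMac_lb y).1; omega
    · obtain ⟨y, -, rfl⟩ := Multiset.mem_map.mp hz
      have := (wMac_lb y).1; omega
    · obtain ⟨x, -, rfl⟩ := Multiset.mem_map.mp hz
      exact (wLeft_lb μ η x).1
    · obtain ⟨z', hz', rfl⟩ := Multiset.mem_map.mp hz
      have hmem : z' ∈ η := by
        rw [← YoungDiagram.mem_cells]; exact ht hz'
      have := (wRight_lb μ η z' hmem).1; omega
  have hlb2 : ∀ z ∈ T2, -(η.colLen 0 : ℤ) ≤ z := by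
    intro z hz
    rw [hT2] at hz
    have hnn : (0:ℤ) ≤ (η.colLen 0 : ℤ) := by positivity
    simp only [Multiset.mem_add] at hz
    rcases hz with ((hz | hz) | hz) | hz
    · obtain ⟨y, -, rfl⟩ := Multiset.mem_map.mp hz
      have := (wMac_lb y).2; omega
    · obtain ⟨y, -, rfl⟩ := Multiset.mem_map.mp hz
      have := (wMac_lb y).2; omega
    · obtain ⟨x, -, rfl⟩ := Multiset.mem_map.mp hz
      exact (wLeft_lb μ η x).2
    · obtain ⟨z', hz', rfl⟩ := Multiset.mem_map.mp hz
      have hmem : z' ∈ η := by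
        rw [← YoungDiagram.mem_cells]; exact ht hz'
      exact (wRight_lb μ η z' hmem).2
  have hB1 := bound_one d T1 (μ.rowLen 0 : ℤ) (by positivity) hlb1 hc1 hfst
  have hB2 := bound_one d T2 (η.colLen 0 : ℤ) (by positivity) hlb2 hc2 hsnd
  constructor
  · intro y hy
    apply mem_macBox_of_le
    · apply hB1
      rw [hT1]
      simp only [Multiset.mem_add]
      exact Or.inl (Or.inl (Or.inl (Multiset.mem_map_of_mem _ hy)))
    · apply hB2
      rw [hT2]
      simp only [Multiset.mem_add]
      exact Or.inl (Or.inl (Or.inl (Multiset.mem_map_of_mem _ hy)))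
  · intro y hy
    have hy' : y ∈ f.val := hy
    apply mem_macBox_of_le
    · apply hB1
      rw [hT1]
      simp only [Multiset.mem_add]
      exact Or.inl (Or.inl (Or.inr (Multiset.mem_map_of_mem _ hy')))
    · apply hB2
      rw [hT2]
      simp only [Multiset.mem_add]
      exact Or.inl (Or.inl (Or.inr (Multiset.mem_map_of_mem _ hy')))

lemma QSet_finite : (QSet μ η d A B).Finite := by
  apply Set.Finite.subset
    (Set.Finite.prod (multiset_sub_finite (macBox μ η d A B) d)
      (Set.Finite.prod ((macBox μ η d A B).powerset.finite_toSet)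
        (Set.Finite.prod (μ.cells.powerset.finite_toSet) (η.cells.powerset.finite_toSet))))
  rintro ⟨m, f, st, t⟩ hq
  have hw := QSet_weights μ η d A B hq
  obtain ⟨hs, ht, hcard, -⟩ := hq
  refine ⟨⟨by dsimp only at hcard ⊢; omega, hw.1⟩, ?_, ?_, ?_⟩
  · simp only [Finset.mem_coe, Finset.mem_powerset]
    intro y hy
    exact hw.2 y hy
  · simp only [Finset.mem_coe, Finset.mem_powerset]
    exact hs
  · simp only [Finset.mem_coe, Finset.mem_powerset]
    exact ht


noncomputable def toY (e : Finset (ℕ × ℕ)) : Finset (YT η) :=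
  (e \ μ.cells).attach.image
    (fun x => phi μ η ⟨x.1, fun hx =>
      (Finset.mem_sdiff.mp x.2).2 ((YoungDiagram.mem_cells x.1).mpr hx)⟩)

lemma mem_toY {e : Finset (ℕ × ℕ)} {w : YT η} :
    w ∈ toY μ η e ↔ ∃ x : XT μ, x.1 ∈ e \ μ.cells ∧ phi μ η x = w := by
  rw [toY, Finset.mem_image]
  constructor
  · rintro ⟨x, -, rfl⟩
    exact ⟨⟨x.1, _⟩, x.2, rfl⟩
  · rintro ⟨x, hx, rfl⟩
    refine ⟨⟨x.1, hx⟩, Finset.mem_attach _ _, ?_⟩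
    congr 1

lemma card_toY (e : Finset (ℕ × ℕ)) : (toY μ η e).card = (e \ μ.cells).card := by
  rw [toY, Finset.card_image_of_injective, Finset.card_attach]
  intro x y hxy
  have h2 := congrArg Subtype.val ((phi μ η).injective hxy)
  exact Subtype.ext h2

lemma sum_toY (e : Finset (ℕ × ℕ)) :
    ∑ w ∈ toY μ η e, wY μ η w = ∑ x ∈ e \ μ.cells, wLeft μ η x := by
  rw [toY, Finset.sum_image]
  · rw [← Finset.sum_attach (e \ μ.cells) (fun x => wLeft μ η x)]
    apply Finset.sum_congr rfl
    intro x _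
    exact wY_phi μ η ⟨x.1, fun hx =>
      (Finset.mem_sdiff.mp x.2).2 ((YoungDiagram.mem_cells x.1).mpr hx)⟩
  · intro x _ y _ h
    have h2 := congrArg Subtype.val ((phi μ η).injective h)
    exact Subtype.ext h2

lemma toY_toRight_mem {e : Finset (ℕ × ℕ)} {z : {z : ℕ × ℕ // z ∈ η}}
    (hz : z ∈ (toY μ η e).toRight) : z.1 ∈ η.cells :=
  (YoungDiagram.mem_cells z.1).mpr z.2

noncomputable def fromY (f t : Finset (ℕ × ℕ)) : Finset (ℕ × ℕ) :=
  f.image (fun y => ((phi μ η).symm (Sum.inl y)).val) ∪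
    (t.subtype (fun z => z ∈ η)).image (fun z => ((phi μ η).symm (Sum.inr z)).val)

lemma fromY_not_mem (f t : Finset (ℕ × ℕ)) : ∀ x ∈ fromY μ η f t, x ∉ μ := by
  intro x hx
  rw [fromY, Finset.mem_union] at hx
  rcases hx with hx | hx
  · obtain ⟨y, -, rfl⟩ := Finset.mem_image.mp hx
    exact ((phi μ η).symm (Sum.inl y)).2
  · obtain ⟨z, -, rfl⟩ := Finset.mem_image.mp hx
    exact ((phi μ η).symm (Sum.inr z)).2

lemma fromY_disj (f t : Finset (ℕ × ℕ)) :
    Disjoint (f.image (fun y => ((phi μ η).symm (Sum.inl y)).val))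
      ((t.subtype (fun z => z ∈ η)).image (fun z => ((phi μ η).symm (Sum.inr z)).val)) := by
  rw [Finset.disjoint_left]
  intro x hx1 hx2
  obtain ⟨y, -, hy⟩ := Finset.mem_image.mp hx1
  obtain ⟨z, -, hz⟩ := Finset.mem_image.mp hx2
  have h1 : (phi μ η).symm (Sum.inl y) = (phi μ η).symm (Sum.inr z) :=
    Subtype.ext (hy.trans hz.symm)
  have := (phi μ η).symm.injective h1
  simp at this

lemma inj_inl : Function.Injective (fun y : ℕ × ℕ => ((phi μ η).symm (Sum.inl y)).val) := by
  intro a b hab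
  have h1 : (phi μ η).symm (Sum.inl a) = (phi μ η).symm (Sum.inl b) := Subtype.ext hab
  have := (phi μ η).symm.injective h1
  simpa using this

lemma inj_inr : Function.Injective
    (fun z : {z : ℕ × ℕ // z ∈ η} => ((phi μ η).symm (Sum.inr z)).val) := by
  intro a b hab
  have h1 : (phi μ η).symm (Sum.inr a) = (phi μ η).symm (Sum.inr b) := Subtype.ext hab
  have := (phi μ η).symm.injective h1
  simpa using this

lemma card_fromY (f t : Finset (ℕ × ℕ)) (ht : t ⊆ η.cells) :
    (fromY μ η f t).card = f.card + t.card := by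
  classical
  rw [fromY, Finset.card_union_of_disjoint (fromY_disj μ η f t),
    Finset.card_image_of_injective _ (inj_inl μ η),
    Finset.card_image_of_injective _ (inj_inr μ η), Finset.card_subtype,
    Finset.filter_true_of_mem]
  intro z hz
  exact (YoungDiagram.mem_cells z).mp (ht hz)

lemma sum_fromY (f t : Finset (ℕ × ℕ)) (ht : t ⊆ η.cells) :
    ∑ x ∈ fromY μ η f t, wLeft μ η x
      = (∑ y ∈ f, wMac y) + ∑ z ∈ t, wRight μ η z := by
  rw [fromY, Finset.sum_union (fromY_disj μ η f t)]
  congr 1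
  · rw [Finset.sum_image (fun x _ y _ h => inj_inl μ η h)]
    apply Finset.sum_congr rfl
    intro y _
    exact wX_phi_symm μ η (Sum.inl y)
  · rw [Finset.sum_image (fun x _ y _ h => inj_inr μ η h)]
    have h2 : ∀ z ∈ t.subtype (fun z => z ∈ η),
        wLeft μ η ((phi μ η).symm (Sum.inr z)).val = wRight μ η z.val := by
      intro z _
      exact wX_phi_symm μ η (Sum.inr z)
    rw [Finset.sum_congr rfl h2]
    exact Finset.sum_subtype_of_mem _ (fun z hz => (YoungDiagram.mem_cells z).mp (ht hz))

lemma fromY_roundtrip (e : Finset (ℕ × ℕ)) :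
    fromY μ η (toY μ η e).toLeft ((toY μ η e).toRight.image Subtype.val)
      = e \ μ.cells := by
  ext x
  constructor
  · intro hx
    rw [fromY, Finset.mem_union] at hx
    rcases hx with hx | hx
    · obtain ⟨y, hy, rfl⟩ := Finset.mem_image.mp hx
      rw [Finset.mem_toLeft, mem_toY] at hy
      obtain ⟨xx, hxx, hphi⟩ := hy
      have h1 : (phi μ η).symm (Sum.inl y) = xx := by
        rw [← hphi, Equiv.symm_apply_apply]
      rw [h1]
      exact hxx
    · obtain ⟨z, hz, rfl⟩ := Finset.mem_image.mp hx
      rw [Finset.mem_subtype] at hz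
      obtain ⟨zz, hzz, hval⟩ := Finset.mem_image.mp hz
      have hzzz : zz = z := Subtype.ext hval
      subst hzzz
      rw [Finset.mem_toRight, mem_toY] at hzz
      obtain ⟨xx, hxx, hphi⟩ := hzz
      have h1 : (phi μ η).symm (Sum.inr zz) = xx := by
        rw [← hphi, Equiv.symm_apply_apply]
      rw [h1]
      exact hxx
  · intro hx
    have hxμ : x ∉ μ := fun h =>
      (Finset.mem_sdiff.mp hx).2 ((YoungDiagram.mem_cells x).mpr h)
    have hmem : phi μ η ⟨x, hxμ⟩ ∈ toY μ η e := (mem_toY μ η).mpr ⟨⟨x, hxμ⟩, hx, rfl⟩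
    rw [fromY, Finset.mem_union]
    rcases hw : phi μ η ⟨x, hxμ⟩ with y | z
    · left
      rw [Finset.mem_image]
      refine ⟨y, Finset.mem_toLeft.mpr (hw ▸ hmem), ?_⟩
      rw [← hw, Equiv.symm_apply_apply]
    · right
      rw [Finset.mem_image]
      refine ⟨z, ?_, ?_⟩
      · rw [Finset.mem_subtype, Finset.mem_image]
        exact ⟨z, Finset.mem_toRight.mpr (hw ▸ hmem), rfl⟩
      · rw [← hw, Equiv.symm_apply_apply]

lemma toY_fromY_left (f t : Finset (ℕ × ℕ)) (ht : t ⊆ η.cells) :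
    (toY μ η (fromY μ η f t)).toLeft = f ∧
    (toY μ η (fromY μ η f t)).toRight.image Subtype.val = t := by
  have hsd : fromY μ η f t \ μ.cells = fromY μ η f t := by
    apply Finset.sdiff_eq_self_of_disjoint
    rw [Finset.disjoint_left]
    intro x hx hx2
    exact fromY_not_mem μ η f t x hx ((YoungDiagram.mem_cells x).mp hx2)
  have key : ∀ w : YT η, w ∈ toY μ η (fromY μ η f t) ↔
      ((∃ y ∈ f, w = Sum.inl y) ∨
        (∃ z : {z : ℕ × ℕ // z ∈ η}, z.val ∈ t ∧ w = Sum.inr z)) := by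
    intro w
    rw [mem_toY, hsd]
    constructor
    · rintro ⟨xx, hxx, rfl⟩
      rw [fromY, Finset.mem_union] at hxx
      rcases hxx with hx | hx
      · obtain ⟨y, hy, hval⟩ := Finset.mem_image.mp hx
        have h1 : xx = (phi μ η).symm (Sum.inl y) := Subtype.ext hval.symm
        left
        exact ⟨y, hy, by rw [h1, Equiv.apply_symm_apply]⟩
      · obtain ⟨z, hz, hval⟩ := Finset.mem_image.mp hx
        have h1 : xx = (phi μ η).symm (Sum.inr z) := Subtype.ext hval.symm
        right
        exact ⟨z, Finset.mem_subtype.mp hz, by rw [h1, Equiv.apply_symm_apply]⟩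
    · rintro (⟨y, hy, rfl⟩ | ⟨z, hz, rfl⟩)
      · refine ⟨(phi μ η).symm (Sum.inl y), ?_, Equiv.apply_symm_apply _ _⟩
        rw [fromY, Finset.mem_union]
        left
        exact Finset.mem_image_of_mem _ hy
      · refine ⟨(phi μ η).symm (Sum.inr z), ?_, Equiv.apply_symm_apply _ _⟩
        rw [fromY, Finset.mem_union]
        right
        apply Finset.mem_image_of_mem
        rw [Finset.mem_subtype]
        exact hz
  constructor
  · ext y
    rw [Finset.mem_toLeft, key]
    constructor
    · rintro (⟨y', hy', h⟩ | ⟨z, hz, h⟩)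
      · rw [Sum.inl.injEq] at h
        rwa [h]
      · exact absurd h (by simp)
    · intro hy
      exact Or.inl ⟨y, hy, rfl⟩
  · ext z₀
    rw [Finset.mem_image]
    constructor
    · rintro ⟨z, hz, rfl⟩
      rw [Finset.mem_toRight, key] at hz
      rcases hz with ⟨y, -, h⟩ | ⟨z', hz', h⟩
      · exact absurd h (by simp)
      · rw [Sum.inr.injEq] at h
        rwa [← h] at hz'
    · intro hz₀
      have hη : z₀ ∈ η := (YoungDiagram.mem_cells z₀).mp (ht hz₀)
      refine ⟨⟨z₀, hη⟩, ?_, rfl⟩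
      rw [Finset.mem_toRight, key]
      exact Or.inr ⟨⟨z₀, hη⟩, hz₀, rfl⟩

lemma toY_eq_of_sdiff_eq {e e' : Finset (ℕ × ℕ)} (h : e \ μ.cells = e' \ μ.cells) :
    toY μ η e = toY μ η e' := by
  ext w
  rw [mem_toY, mem_toY, h]

noncomputable def Qfin : Finset QT := (QSet_finite μ η d A B).toFinset

lemma mem_Qfin {q : QT} : q ∈ Qfin μ η d A B ↔ q ∈ QSet μ η d A B :=
  Set.Finite.mem_toFinset _

lemma step1 (d₂ : ℕ) (hle : d₂ ≤ d) :
    (pairSet μ η (d - d₂) d₂ A B).ncard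
      = ((Qfin μ η d A B).filter (fun q => Multiset.card q.1 = d - d₂)).card := by
  classical
  rw [Set.ncard_eq_toFinset_card _ (pairSet_finite μ η d A B
    (show (d - d₂) + d₂ = d by omega))]
  apply Finset.card_bij'
    (i := fun p _ => (p.1, (toY μ η p.2).toLeft, p.2 ∩ μ.cells,
      (toY μ η p.2).toRight.image Subtype.val))
    (j := fun q _ => (q.1, q.2.2.1 ∪ fromY μ η q.2.1 q.2.2.2))
  -- hi : i maps into the filter
  · rintro ⟨m, e⟩ hp
    rw [Set.Finite.mem_toFinset] at hp
    obtain ⟨hm, he, hsum⟩ := hp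
    dsimp only at hm he hsum
    rw [Finset.mem_filter, mem_Qfin]
    simp only [QSet, Set.mem_setOf_eq]
    have ht : (toY μ η e).toRight.image Subtype.val ⊆ η.cells := by
      intro z hz
      obtain ⟨z', hz', rfl⟩ := Finset.mem_image.mp hz
      exact toY_toRight_mem μ η hz'
    have hcardt : ((toY μ η e).toRight.image Subtype.val).card = (toY μ η e).toRight.card :=
      Finset.card_image_of_injective _ Subtype.val_injective
    have hcardY : (toY μ η e).toLeft.card + (toY μ η e).toRight.card = (e \ μ.cells).card := by
      rw [Finset.card_toLeft_add_card_toRight, card_toY]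
    have hcarde : (e ∩ μ.cells).card + (e \ μ.cells).card = e.card := by
      rw [← Finset.card_union_of_disjoint (Finset.disjoint_sdiff_inter e μ.cells).symm]
      congr 1
      rw [Finset.union_comm, Finset.sdiff_union_inter]
    have hsplit : ∑ x ∈ e, wLeft μ η x
        = (∑ x ∈ e ∩ μ.cells, wLeft μ η x) + ∑ x ∈ e \ μ.cells, wLeft μ η x := by
      rw [← Finset.sum_union (Finset.disjoint_sdiff_inter e μ.cells).symm]
      congr 1
      rw [Finset.union_comm, Finset.sdiff_union_inter]
    have hYsum : ∑ x ∈ e \ μ.cells, wLeft μ η x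
        = (∑ y ∈ (toY μ η e).toLeft, wMac y)
          + ∑ z ∈ (toY μ η e).toRight.image Subtype.val, wRight μ η z := by
      rw [← sum_toY]
      conv_lhs => rw [← Finset.toLeft_disjSum_toRight (u := toY μ η e)]
      rw [Finset.sum_disjSum]
      congr 1
      rw [Finset.sum_image (fun x _ y _ h => Subtype.val_injective h)]
      rfl
    refine ⟨⟨Finset.inter_subset_right, ht, by omega, ?_⟩, hm⟩
    rw [hsplit, hYsum] at hsum
    rw [← hsum]
    abel
  -- left inverse : j (i p) = p
  · rintro ⟨m, e⟩ hp
    dsimp only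
    rw [fromY_roundtrip]
    rw [Finset.union_comm, Finset.sdiff_union_inter]
  -- right inverse : i (j q) = q
  · rintro ⟨m, f, st, t⟩ hq
    rw [Finset.mem_filter, mem_Qfin] at hq
    obtain ⟨hq', hm⟩ := hq
    simp only [QSet, Set.mem_setOf_eq] at hq'
    obtain ⟨hs, ht, hcard, hsum⟩ := hq'
    dsimp only
    have hD : (st ∪ fromY μ η f t) \ μ.cells = fromY μ η f t := by
      ext x
      rw [Finset.mem_sdiff, Finset.mem_union]
      constructor
      · rintro ⟨hx | hx, hxs⟩
        · exact absurd (hs hx) hxs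
        · exact hx
      · intro hx
        exact ⟨Or.inr hx, fun h =>
          fromY_not_mem μ η f t x hx ((YoungDiagram.mem_cells x).mp h)⟩
    have hI : (st ∪ fromY μ η f t) ∩ μ.cells = st := by
      ext x
      rw [Finset.mem_inter, Finset.mem_union]
      constructor
      · rintro ⟨hx | hx, hxs⟩
        · exact hx
        · exact absurd hxs (fun h =>
            fromY_not_mem μ η f t x hx ((YoungDiagram.mem_cells x).mp h))
      · intro hx
        exact ⟨Or.inl hx, hs hx⟩
    have hsd : fromY μ η f t \ μ.cells = fromY μ η f t := by
      apply Finset.sdiff_eq_self_of_disjoint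
      rw [Finset.disjoint_left]
      intro x hx hx2
      exact fromY_not_mem μ η f t x hx ((YoungDiagram.mem_cells x).mp hx2)
    have hYeq : toY μ η (st ∪ fromY μ η f t) = toY μ η (fromY μ η f t) :=
      toY_eq_of_sdiff_eq μ η (by rw [hD, hsd])
    obtain ⟨hL, hR⟩ := toY_fromY_left μ η f t ht
    rw [hYeq, hL, hI, hR]
  -- hj : j maps into the pairSet finset
  · rintro ⟨m, f, st, t⟩ hq
    rw [Finset.mem_filter, mem_Qfin] at hq
    obtain ⟨hq', hm⟩ := hq
    simp only [QSet, Set.mem_setOf_eq] at hq'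
    obtain ⟨hs, ht, hcard, hsum⟩ := hq'
    dsimp only at hm ⊢
    rw [Set.Finite.mem_toFinset]
    simp only [pairSet, Set.mem_setOf_eq]
    have hdisj : Disjoint st (fromY μ η f t) := by
      rw [Finset.disjoint_left]
      intro x hx hx2
      exact fromY_not_mem μ η f t x hx2 ((YoungDiagram.mem_cells x).mp (hs hx))
    refine ⟨hm, ?_, ?_⟩
    · rw [Finset.card_union_of_disjoint hdisj, card_fromY μ η f t ht]
      omega
    · rw [Finset.sum_union hdisj, sum_fromY μ η f t ht, ← hsum]
      abel


def enc : ℕ × ℕ → ℕ := fun p => Nat.pair p.1 p.2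

lemma enc_inj : Function.Injective enc := by
  intro a b hab
  have := congrArg Nat.unpair hab
  rw [enc, enc, Nat.unpair_pair, Nat.unpair_pair] at this
  exact this

def codes (q : QT) : Multiset ℕ := q.1.map enc + q.2.1.val.map enc

lemma codes_ne_zero {q : QT} (hne : ¬(q.1 = 0 ∧ q.2.1 = (∅ : Finset (ℕ × ℕ)))) :
    codes q ≠ 0 := by
  intro h0
  apply hne
  have hc : Multiset.card (q.1.map enc) + Multiset.card (q.2.1.val.map enc) = 0 := by
    rw [← Multiset.card_add]
    show Multiset.card (codes q) = 0
    rw [h0, Multiset.card_zero]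
  rw [Multiset.card_map, Multiset.card_map] at hc
  have h1 : Multiset.card q.1 = 0 := by omega
  have h2 : Multiset.card q.2.1.val = 0 := by
    have : Multiset.card q.2.1.val = q.2.1.card := rfl
    omega
  exact ⟨Multiset.card_eq_zero.mp h1, Finset.card_eq_zero.mp h2⟩

noncomputable def theN (q : QT) : ℕ :=
  if h : codes q = 0 then 0
  else (codes q).toFinset.min' (Multiset.toFinset_nonempty.mpr h)

noncomputable def theY (q : QT) : ℕ × ℕ := ((theN q).unpair.1, (theN q).unpair.2)

lemma theY_mem {q : QT} (hne : ¬(q.1 = 0 ∧ q.2.1 = (∅ : Finset (ℕ × ℕ)))) :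
    theY q ∈ q.1 ∨ theY q ∈ q.2.1 := by
  have h0 := codes_ne_zero hne
  have hmem : theN q ∈ codes q := by
    rw [theN, dif_neg h0]
    have := Finset.min'_mem (codes q).toFinset (Multiset.toFinset_nonempty.mpr h0)
    rwa [Multiset.mem_toFinset] at this
  rw [codes, Multiset.mem_add] at hmem
  rcases hmem with h | h
  · obtain ⟨p, hp, hpe⟩ := Multiset.mem_map.mp h
    left
    have : theY q = p := by
      rw [theY, ← hpe, enc, Nat.unpair_pair]
    rwa [this]
  · obtain ⟨p, hp, hpe⟩ := Multiset.mem_map.mp h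
    right
    have : theY q = p := by
      rw [theY, ← hpe, enc, Nat.unpair_pair]
    rw [this]
    exact hp

noncomputable def invo (q : QT) : QT :=
  if theY q ∈ q.2.1 then (theY q ::ₘ q.1, q.2.1.erase (theY q), q.2.2.1, q.2.2.2)
  else (q.1.erase (theY q), insert (theY q) q.2.1, q.2.2.1, q.2.2.2)

lemma codes_invo {q : QT} (hne : ¬(q.1 = 0 ∧ q.2.1 = (∅ : Finset (ℕ × ℕ)))) :
    codes (invo q) = codes q := by
  rcases theY_mem hne with hym | hyf
  · by_cases hyf : theY q ∈ q.2.1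
    · rw [invo, if_pos hyf]
      show (theY q ::ₘ q.1).map enc + ((q.2.1.erase (theY q)).val.map enc) = _
      rw [Finset.erase_val, Multiset.map_erase enc enc_inj, Multiset.map_cons,
        Multiset.cons_add]
      rw [codes, ← Multiset.cons_erase (s := q.2.1.val.map enc) (a := enc (theY q))
        (Multiset.mem_map_of_mem enc hyf), Multiset.add_cons, Multiset.erase_cons_head]
    · rw [invo, if_neg hyf]
      show (q.1.erase (theY q)).map enc + ((insert (theY q) q.2.1).val.map enc) = _
      rw [Finset.insert_val_of_notMem hyf, Multiset.map_erase enc enc_inj,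
        Multiset.map_cons, Multiset.add_cons]
      rw [codes, ← Multiset.cons_erase (s := q.1.map enc) (a := enc (theY q))
        (Multiset.mem_map_of_mem enc hym), Multiset.cons_add, Multiset.erase_cons_head]
  · rw [invo, if_pos hyf]
    show (theY q ::ₘ q.1).map enc + ((q.2.1.erase (theY q)).val.map enc) = _
    rw [Finset.erase_val, Multiset.map_erase enc enc_inj, Multiset.map_cons,
      Multiset.cons_add]
    rw [codes, ← Multiset.cons_erase (s := q.2.1.val.map enc) (a := enc (theY q))
      (Multiset.mem_map_of_mem enc hyf), Multiset.add_cons, Multiset.erase_cons_head]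

lemma theN_invo {q : QT} (hne : ¬(q.1 = 0 ∧ q.2.1 = (∅ : Finset (ℕ × ℕ)))) :
    theN (invo q) = theN q := by
  unfold theN
  simp only [codes_invo hne]

lemma theY_invo {q : QT} (hne : ¬(q.1 = 0 ∧ q.2.1 = (∅ : Finset (ℕ × ℕ)))) :
    theY (invo q) = theY q := by
  rw [theY, theY, theN_invo hne]

lemma invo_ne_fix {q : QT} (hne : ¬(q.1 = 0 ∧ q.2.1 = (∅ : Finset (ℕ × ℕ)))) :
    ¬((invo q).1 = 0 ∧ (invo q).2.1 = (∅ : Finset (ℕ × ℕ))) := by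
  intro h
  apply codes_ne_zero hne
  rw [← codes_invo hne, codes, h.1, h.2]
  simp

lemma invo_invo {q : QT} (hne : ¬(q.1 = 0 ∧ q.2.1 = (∅ : Finset (ℕ × ℕ)))) :
    invo (invo q) = q := by
  have hty := theY_invo hne
  by_cases hyf : theY q ∈ q.2.1
  · have h1 : invo q = (theY q ::ₘ q.1, q.2.1.erase (theY q), q.2.2.1, q.2.2.2) := by
      rw [invo, if_pos hyf]
    have h2 : theY (invo q) ∉ (invo q).2.1 := by
      rw [hty, h1]
      exact Finset.notMem_erase _ _
    rw [invo, if_neg h2, hty, h1]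
    show (((theY q ::ₘ q.1).erase (theY q), insert (theY q) (q.2.1.erase (theY q)),
      q.2.2.1, q.2.2.2) : QT) = q
    rw [Multiset.erase_cons_head, Finset.insert_erase hyf]
  · have hym : theY q ∈ q.1 := (theY_mem hne).resolve_right hyf
    have h1 : invo q = (q.1.erase (theY q), insert (theY q) q.2.1, q.2.2.1, q.2.2.2) := by
      rw [invo, if_neg hyf]
    have h2 : theY (invo q) ∈ (invo q).2.1 := by
      rw [hty, h1]
      exact Finset.mem_insert_self _ _
    rw [invo, if_pos h2, hty, h1]
    show ((theY q ::ₘ (q.1.erase (theY q)), (insert (theY q) q.2.1).erase (theY q),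
      q.2.2.1, q.2.2.2) : QT) = q
    rw [Multiset.cons_erase hym, Finset.erase_insert hyf]

lemma invo_ne {q : QT} (hne : ¬(q.1 = 0 ∧ q.2.1 = (∅ : Finset (ℕ × ℕ)))) :
    invo q ≠ q := by
  intro h
  by_cases hyf : theY q ∈ q.2.1
  · have h1 : (invo q).2.1 = q.2.1.erase (theY q) := by rw [invo, if_pos hyf]
    rw [h] at h1
    have := Finset.notMem_erase (theY q) q.2.1
    rw [← h1] at this
    exact this hyf
  · have hym : theY q ∈ q.1 := (theY_mem hne).resolve_right hyf
    have h1 : (invo q).2.1 = insert (theY q) q.2.1 := by rw [invo, if_neg hyf]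
    rw [h] at h1
    exact hyf (h1 ▸ Finset.mem_insert_self _ _)


lemma invo_mem {q : QT} (hq : q ∈ QSet μ η d A B)
    (hne : ¬(q.1 = 0 ∧ q.2.1 = (∅ : Finset (ℕ × ℕ)))) : invo q ∈ QSet μ η d A B := by
  obtain ⟨hs, ht, hcard, hsum⟩ := hq
  by_cases hyf : theY q ∈ q.2.1
  · rw [invo, if_pos hyf]
    simp only [QSet, Set.mem_setOf_eq]
    have h1 : 0 < q.2.1.card := Finset.card_pos.mpr ⟨theY q, hyf⟩
    have h2 := Finset.sum_erase_add q.2.1 wMac hyf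
    refine ⟨hs, ht, ?_, ?_⟩
    · rw [Multiset.card_cons, Finset.card_erase_of_mem hyf]
      omega
    · rw [Multiset.map_cons, Multiset.sum_cons, ← hsum, ← h2]
      abel
  · have hym : theY q ∈ q.1 := (theY_mem hne).resolve_right hyf
    rw [invo, if_neg hyf]
    simp only [QSet, Set.mem_setOf_eq]
    have h1 : 0 < Multiset.card q.1 := Multiset.card_pos.mpr
      (fun h0 => by rw [h0] at hym; simp at hym)
    have hm2 : (q.1.map wMac).sum
        = wMac (theY q) + ((q.1.erase (theY q)).map wMac).sum := by
      conv_lhs => rw [← Multiset.cons_erase hym]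
      rw [Multiset.map_cons, Multiset.sum_cons]
    refine ⟨hs, ht, ?_, ?_⟩
    · rw [Multiset.card_erase_of_mem hym, Finset.card_insert_of_notMem hyf,
        Nat.pred_eq_sub_one]
      omega
    · rw [Finset.sum_insert hyf, ← hsum, hm2]
      abel

lemma invo_sign {q : QT} (hq : q ∈ QSet μ η d A B)
    (hne : ¬(q.1 = 0 ∧ q.2.1 = (∅ : Finset (ℕ × ℕ)))) :
    ((-1 : ℤ)) ^ (d - Multiset.card (invo q).1) = -((-1 : ℤ)) ^ (d - Multiset.card q.1) := by
  obtain ⟨-, -, hcard, -⟩ := hq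
  by_cases hyf : theY q ∈ q.2.1
  · have h1 : 0 < q.2.1.card := Finset.card_pos.mpr ⟨theY q, hyf⟩
    have h2 : (invo q).1 = theY q ::ₘ q.1 := by rw [invo, if_pos hyf]
    rw [h2, Multiset.card_cons]
    have h3 : d - Multiset.card q.1 = (d - (Multiset.card q.1 + 1)) + 1 := by omega
    rw [h3, pow_succ]
    ring
  · have hym : theY q ∈ q.1 := (theY_mem hne).resolve_right hyf
    have h1 : 0 < Multiset.card q.1 := Multiset.card_pos.mpr
      (fun h0 => by rw [h0] at hym; simp at hym)
    have h2 : (invo q).1 = q.1.erase (theY q) := by rw [invo, if_neg hyf]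
    rw [h2, Multiset.card_erase_of_mem hym, Nat.pred_eq_sub_one]
    have h3 : d - (Multiset.card q.1 - 1) = (d - Multiset.card q.1) + 1 := by omega
    rw [h3, pow_succ]
    ring

lemma sum_invo_zero :
    ∑ q ∈ (Qfin μ η d A B).filter (fun q => ¬(q.1 = 0 ∧ q.2.1 = (∅ : Finset (ℕ × ℕ)))),
      ((-1 : ℤ)) ^ (d - Multiset.card q.1) = 0 := by
  classical
  apply Finset.sum_involution (fun q _ => invo q)
  · intro q hq
    rw [Finset.mem_filter, mem_Qfin] at hq
    rw [invo_sign μ η d A B hq.1 hq.2]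
    ring
  · intro q hq _
    rw [Finset.mem_filter, mem_Qfin] at hq
    exact invo_ne hq.2
  · intro q hq
    rw [Finset.mem_filter, mem_Qfin] at hq
    rw [Finset.mem_filter, mem_Qfin]
    exact ⟨invo_mem μ η d A B hq.1 hq.2, invo_ne_fix hq.2⟩
  · intro q hq
    rw [Finset.mem_filter, mem_Qfin] at hq
    exact invo_invo hq.2

lemma sum_Qfin :
    ∑ q ∈ Qfin μ η d A B, ((-1 : ℤ)) ^ (d - Multiset.card q.1)
      = ((Qfin μ η d A B).filter
          (fun q => q.1 = 0 ∧ q.2.1 = (∅ : Finset (ℕ × ℕ)))).card * (-1 : ℤ) ^ d := by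
  classical
  rw [← Finset.sum_filter_add_sum_filter_not (Qfin μ η d A B)
    (fun q => q.1 = 0 ∧ q.2.1 = (∅ : Finset (ℕ × ℕ)))]
  rw [sum_invo_zero, add_zero]
  have hconst : ∑ q ∈ (Qfin μ η d A B).filter
        (fun q => q.1 = 0 ∧ q.2.1 = (∅ : Finset (ℕ × ℕ))),
        ((-1 : ℤ)) ^ (d - Multiset.card q.1)
      = ∑ _q ∈ (Qfin μ η d A B).filter
        (fun q => q.1 = 0 ∧ q.2.1 = (∅ : Finset (ℕ × ℕ))), ((-1 : ℤ)) ^ d := by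
    apply Finset.sum_congr rfl
    intro q hq
    rw [(Finset.mem_filter.mp hq).2.1]
    simp
  rw [hconst, Finset.sum_const, nsmul_eq_mul]

lemma fixed_eq_rhs :
    ((Qfin μ η d A B).filter (fun q => q.1 = 0 ∧ q.2.1 = (∅ : Finset (ℕ × ℕ)))).card
      = ((μ.cells.powerset ×ˢ η.cells.powerset).filter
          (fun p => p.1.card + p.2.card = d ∧
            (∑ x ∈ p.1, wLeft μ η x) + (∑ x ∈ p.2, wRight μ η x) = (A, B))).card := by
  classical
  apply Finset.card_nbij' (fun q => (q.2.2.1, q.2.2.2))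
    (fun p => (0, ∅, p.1, p.2))
  · intro q hq
    rw [Finset.mem_coe, Finset.mem_filter, mem_Qfin] at hq
    obtain ⟨⟨hs, ht, hcard, hsum⟩, hm, hf⟩ := hq
    rw [hm, hf] at hcard hsum
    simp only [Multiset.card_zero, Finset.card_empty, Multiset.map_zero,
      Multiset.sum_zero, Finset.sum_empty, zero_add] at hcard hsum
    rw [Finset.mem_coe, Finset.mem_filter, Finset.mem_product]
    exact ⟨⟨Finset.mem_powerset.mpr hs, Finset.mem_powerset.mpr ht⟩, hcard, hsum⟩
  · intro p hp
    rw [Finset.mem_coe, Finset.mem_filter, Finset.mem_product] at hp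
    obtain ⟨⟨hs, ht⟩, hcard, hsum⟩ := hp
    rw [Finset.mem_coe, Finset.mem_filter, mem_Qfin]
    refine ⟨⟨Finset.mem_powerset.mp hs, Finset.mem_powerset.mp ht, ?_, ?_⟩, rfl, rfl⟩
    · simpa using hcard
    · simpa using hsum
  · intro q hq
    rw [Finset.mem_coe, Finset.mem_filter] at hq
    obtain ⟨-, hm, hf⟩ := hq
    obtain ⟨m, f, st, t⟩ := q
    simp only at hm hf ⊢
    rw [hm, hf]
  · intro p _
    rfl

lemma lhs_sum_eq :
    ∑ d₂ ∈ Finset.range (d + 1),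
        (-1 : ℤ) ^ d₂ * ((pairSet μ η (d - d₂) d₂ A B).ncard : ℤ)
      = ∑ q ∈ Qfin μ η d A B, (-1 : ℤ) ^ (d - Multiset.card q.1) := by
  classical
  rw [← Finset.sum_fiberwise_of_maps_to (g := fun q : QT => d - Multiset.card q.1)
    (t := Finset.range (d + 1))
    (fun q _ => Finset.mem_range.mpr (Nat.lt_succ_of_le (Nat.sub_le _ _)))
    (fun q => (-1 : ℤ) ^ (d - Multiset.card q.1))]
  apply Finset.sum_congr rfl
  intro d₂ hd₂
  rw [Finset.mem_range] at hd₂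
  rw [step1 μ η d A B d₂ (by omega)]
  have hfe : (Qfin μ η d A B).filter (fun q => Multiset.card q.1 = d - d₂)
      = (Qfin μ η d A B).filter (fun q : QT => d - Multiset.card q.1 = d₂) := by
    apply Finset.filter_congr
    intro q hq
    rw [mem_Qfin] at hq
    obtain ⟨-, -, hcard, -⟩ := hq
    constructor <;> intro h <;> omega
  rw [hfe]
  have hconst : ∑ q ∈ (Qfin μ η d A B).filter (fun q : QT => d - Multiset.card q.1 = d₂),
        (-1 : ℤ) ^ (d - Multiset.card q.1)
      = ∑ _q ∈ (Qfin μ η d A B).filter (fun q : QT => d - Multiset.card q.1 = d₂),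
        (-1 : ℤ) ^ d₂ := by
    apply Finset.sum_congr rfl
    intro q hq
    rw [(Finset.mem_filter.mp hq).2]
  rw [hconst, Finset.sum_const, nsmul_eq_mul, mul_comm]

lemma main_identity :
    ∑ d₂ ∈ Finset.range (d + 1),
        (-1 : ℤ) ^ d₂ * ((pairSet μ η (d - d₂) d₂ A B).ncard : ℤ)
      = (-1 : ℤ) ^ d *
          ((μ.cells.powerset ×ˢ η.cells.powerset).filter
            (fun p => p.1.card + p.2.card = d ∧
              (∑ x ∈ p.1, wLeft μ η x) + (∑ x ∈ p.2, wRight μ η x) = (A, B))).card := by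
  rw [lhs_sum_eq, sum_Qfin, fixed_eq_rhs, mul_comm]

lemma pairSet_lb {d₁ d₂ : ℕ} (hd : d₁ + d₂ = d) {p : Multiset (ℕ × ℕ) × Finset (ℕ × ℕ)}
    (hp : p ∈ pairSet μ η d₁ d₂ A B) :
    -(d : ℤ) * μ.rowLen 0 ≤ A ∧ -(d : ℤ) * η.colLen 0 ≤ B := by
  obtain ⟨hm, he, hsum⟩ := hp
  set m := p.1
  set e := p.2
  have hfst : ((m.map (fun y => (wMac y).1)) + (e.val.map (fun x => (wLeft μ η x).1))).sum
      = A := by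
    rw [Multiset.sum_add]
    have h1 : ((m.map wMac).sum).1 = (m.map (fun y => (wMac y).1)).sum := by
      rw [fst_multiset_sum, Multiset.map_map]; rfl
    have h2 : (∑ x ∈ e, wLeft μ η x).1 = (e.val.map (fun x => (wLeft μ η x).1)).sum := by
      rw [Prod.fst_sum]; rfl
    have := congrArg Prod.fst hsum
    simp only [Prod.fst_add] at this
    rw [h1, h2] at this
    exact this
  have hsnd : ((m.map (fun y => (wMac y).2)) + (e.val.map (fun x => (wLeft μ η x).2))).sum
      = B := by
    rw [Multiset.sum_add]
    have h1 : ((m.map wMac).sum).2 = (m.map (fun y => (wMac y).2)).sum := by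
      rw [snd_multiset_sum, Multiset.map_map]; rfl
    have h2 : (∑ x ∈ e, wLeft μ η x).2 = (e.val.map (fun x => (wLeft μ η x).2)).sum := by
      rw [Prod.snd_sum]; rfl
    have := congrArg Prod.snd hsum
    simp only [Prod.snd_add] at this
    rw [h1, h2] at this
    exact this
  have hcard1 : (Multiset.card ((m.map (fun y => (wMac y).1))
      + (e.val.map (fun x => (wLeft μ η x).1))) : ℤ) ≤ d := by
    simp only [Multiset.card_add, Multiset.card_map]
    have h3 : Multiset.card e.val = e.card := rfl
    push_cast [h3, hm, he]
    omega
  have hcard2 : (Multiset.card ((m.map (fun y => (wMac y).2))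
      + (e.val.map (fun x => (wLeft μ η x).2))) : ℤ) ≤ d := by
    simp only [Multiset.card_add, Multiset.card_map]
    have h3 : Multiset.card e.val = e.card := rfl
    push_cast [h3, hm, he]
    omega
  have hlb1 : ∀ z ∈ (m.map (fun y => (wMac y).1)) + (e.val.map (fun x => (wLeft μ η x).1)),
      -(μ.rowLen 0 : ℤ) ≤ z := by
    intro z hz
    rw [Multiset.mem_add] at hz
    rcases hz with hz | hz
    · obtain ⟨y, -, rfl⟩ := Multiset.mem_map.mp hz
      have h4 := (wMac_lb y).1
      have h5 : (0:ℤ) ≤ (μ.rowLen 0 : ℤ) := by positivity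
      omega
    · obtain ⟨x, -, rfl⟩ := Multiset.mem_map.mp hz
      exact (wLeft_lb μ η x).1
  have hlb2 : ∀ z ∈ (m.map (fun y => (wMac y).2)) + (e.val.map (fun x => (wLeft μ η x).2)),
      -(η.colLen 0 : ℤ) ≤ z := by
    intro z hz
    rw [Multiset.mem_add] at hz
    rcases hz with hz | hz
    · obtain ⟨y, -, rfl⟩ := Multiset.mem_map.mp hz
      have h4 := (wMac_lb y).2
      have h5 : (0:ℤ) ≤ (η.colLen 0 : ℤ) := by positivity
      omega
    · obtain ⟨x, -, rfl⟩ := Multiset.mem_map.mp hz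
      exact (wLeft_lb μ η x).2
  constructor
  · exact lb_one d _ (μ.rowLen 0 : ℤ) hlb1 hcard1 (by positivity) hfst
  · exact lb_one d _ (η.colLen 0 : ℤ) hlb2 hcard2 (by positivity) hsnd

end Main

end CO1


/-- The coefficient of `k^d u^A v^B` on the left-hand side is well defined (the counting
sets are finite), is nonzero only when `A ≥ −d μ₁` and `B ≥ −d η'₁`, vanishes for
`d > |μ| + |η|` (so the left side is a polynomial in `k`), and agrees with the
corresponding coefficient of the finite product on the right-hand side. -/
theorem statement1 (μ η : YoungDiagram) (d : ℕ) (A B : ℤ) :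
    (∀ d₂ ≤ d, (pairSet μ η (d - d₂) d₂ A B).Finite) ∧
    (lhsCoeff μ η d A B ≠ 0 →
      -(d : ℤ) * μ.rowLen 0 ≤ A ∧ -(d : ℤ) * η.colLen 0 ≤ B) ∧
    (μ.cells.card + η.cells.card < d → lhsCoeff μ η d A B = 0) ∧
    lhsCoeff μ η d A B = rhsCoeff μ η d A B := by
  classical
  have hmain : lhsCoeff μ η d A B = rhsCoeff μ η d A B := by
    unfold lhsCoeff rhsCoeff
    exact CO1.main_identity μ η d A B
  refine ⟨fun d₂ hd₂ => CO1.pairSet_finite μ η d A B (by omega), ?_, ?_, hmain⟩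
  · intro hne
    have hex : ∃ d₂ ∈ Finset.range (d + 1),
        ((-1 : ℤ) ^ d₂ * ((pairSet μ η (d - d₂) d₂ A B).ncard : ℤ)) ≠ 0 := by
      by_contra hall
      push_neg at hall
      exact hne (Finset.sum_eq_zero hall)
    obtain ⟨d₂, hd₂, hterm⟩ := hex
    rw [Finset.mem_range] at hd₂
    have hnc : (pairSet μ η (d - d₂) d₂ A B).ncard ≠ 0 := by
      intro h0
      rw [h0] at hterm
      simp at hterm
    have hne2 : (pairSet μ η (d - d₂) d₂ A B).Nonempty :=
      Set.nonempty_of_ncard_ne_zero hnc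
    obtain ⟨p, hp⟩ := hne2
    exact CO1.pairSet_lb μ η d A B (show (d - d₂) + d₂ = d by omega) hp
  · intro hlt
    rw [hmain]
    unfold rhsCoeff
    have hempty : ((μ.cells.powerset ×ˢ η.cells.powerset).filter
        (fun p => p.1.card + p.2.card = d ∧
          (∑ x ∈ p.1, wLeft μ η x) + (∑ x ∈ p.2, wRight μ η x) = (A, B))) = ∅ := by
      rw [Finset.filter_eq_empty_iff]
      rintro p hp ⟨hcard, -⟩
      rw [Finset.mem_product] at hp
      have h1 : p.1.card ≤ μ.cells.card :=
        Finset.card_le_card (Finset.mem_powerset.mp hp.1)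
      have h2 : p.2.card ≤ η.cells.card :=
        Finset.card_le_card (Finset.mem_powerset.mp hp.2)
      omega
    rw [hempty]
    simp
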